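/- Fix n ≥ 2, a complex parameter h, and r ∈ ℂ with r ≠ 0, and let X̂⁰ := M₀ ∘ (id + i·h·r·∂₀) and X̂ⁱ := M_i ∘ g_r (with g_r := Σ_{m≥0} binom(−1/r, m)·(i h r)^m·∂₀^m) be the Jordanian realization of κ-Minkowski coordinates on A = ℂ[x⁰, …, x^{n-1}]. Then together with the momenta P_μ = −i∂_μ they close the r-deformed phase space relations: [X̂⁰, P₀] = i·(id + i·h·r·∂₀) (i.e. i(1 − hrP₀)), [X̂⁰, P_k] = 0, [X̂ⁱ, P₀] = 0, and [X̂ⁱ, P_k] = i·δⁱ_k·g_r (i.e. i·δⁱ_k·(1 − hrP₀)^{−1/r}), for all i, k ∈ {1, …, n−1}. -/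

import Mathlib

open MvPolynomial

/-- Multiplication operator by the variable `x^μ` on `ℂ[x⁰, …, x^{n-1}]`. -/
noncomputable def Mop {n : ℕ} (μ : Fin n) : Module.End ℂ (MvPolynomial (Fin n) ℂ) :=
  LinearMap.mulLeft ℂ (MvPolynomial.X μ)

/-- Momentum operator `P_μ = −i·∂_μ` on `ℂ[x⁰, …, x^{n-1}]`. -/
noncomputable def Pop {n : ℕ} (μ : Fin n) : Module.End ℂ (MvPolynomial (Fin n) ℂ) :=
  (-Complex.I) • (MvPolynomial.pderiv μ).toLinearMap

/-- The generalized binomial coefficient `binom(α, m) = α(α−1)⋯(α−m+1)/m!`. -/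
noncomputable def genBinom (α : ℂ) (m : ℕ) : ℂ :=
  (∏ i ∈ Finset.range m, (α - (i : ℂ))) / (Nat.factorial m : ℂ)

/-- Total degree does not increase under partial derivatives. -/
lemma totalDegree_pderiv_le {σ : Type*} [DecidableEq σ] (i : σ) (f : MvPolynomial σ ℂ) :
    (MvPolynomial.pderiv i f).totalDegree ≤ f.totalDegree := by
  conv_lhs => rw [f.as_sum]
  rw [map_sum]
  refine (MvPolynomial.totalDegree_finset_sum _ _).trans (Finset.sup_le fun s hs => ?_)
  rw [MvPolynomial.pderiv_monomial]
  refine (MvPolynomial.totalDegree_monomial_le _ _).trans ?_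
  refine le_trans ?_ (MvPolynomial.le_totalDegree hs)
  exact Finsupp.sum_le_sum_index tsub_le_self (fun _ _ => monotone_id) (fun _ _ => rfl)

/-- Partial derivatives commute. -/
lemma pderiv_comm' {σ : Type*} [DecidableEq σ] (i j : σ) (f : MvPolynomial σ ℂ) :
    MvPolynomial.pderiv i (MvPolynomial.pderiv j f) =
      MvPolynomial.pderiv j (MvPolynomial.pderiv i f) := by
  induction f using MvPolynomial.induction_on' with
  | monomial s a =>
    simp only [MvPolynomial.pderiv_monomial]
    rcases eq_or_ne i j with rfl | hij
    · rfl
    · simp only [Finsupp.tsub_apply, Finsupp.single_apply, if_neg hij, if_neg (Ne.symm hij),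
        tsub_zero, tsub_tsub]
      rw [add_comm (Finsupp.single j 1), mul_right_comm]
  | add p q hp hq => simp [hp, hq]

/-- Fix `n ≥ 2`, `h ∈ ℂ` and `r ∈ ℂ`, `r ≠ 0`, and let
`X̂⁰ = M₀ ∘ (id + i·h·r·∂₀)` and `X̂ⁱ = M_i ∘ g_r` be the Jordanian realization of
κ-Minkowski coordinates (with `g_r = Σ_m binom(−1/r, m)·(ihr)^m·∂₀^m`, well defined on
polynomials by local nilpotency of `∂₀`). Together with `P_μ = −i∂_μ` they close the
`r`-deformed phase space relations: `[X̂⁰, P₀] = i·(1 − hrP₀)`, `[X̂⁰, P_k] = 0`,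
`[X̂ⁱ, P₀] = 0` and `[X̂ⁱ, P_k] = i·δⁱ_k·(1 − hrP₀)^{−1/r}`. -/
theorem jordanian_twist_deformed_phase_space (n : ℕ) (hn : 2 ≤ n) (h r : ℂ) (hr : r ≠ 0)
    (z : Fin n) (hz : (z : ℕ) = 0)
    (g : Module.End ℂ (MvPolynomial (Fin n) ℂ))
    (hg : ∀ (f : MvPolynomial (Fin n) ℂ) (N : ℕ), f.totalDegree < N →
      g f = ∑ m ∈ Finset.range N,
        (genBinom (-1 / r) m * (Complex.I * h * r) ^ m) •
          (((MvPolynomial.pderiv z).toLinearMap ^ m) f)) :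
    ((Mop z ∘ₗ (LinearMap.id + (Complex.I * h * r) • (MvPolynomial.pderiv z).toLinearMap))
        ∘ₗ Pop z -
      Pop z ∘ₗ
        (Mop z ∘ₗ (LinearMap.id + (Complex.I * h * r) • (MvPolynomial.pderiv z).toLinearMap))
      = Complex.I •
          (LinearMap.id + (Complex.I * h * r) • (MvPolynomial.pderiv z).toLinearMap)) ∧
    (∀ k : Fin n, k ≠ z →
      (Mop z ∘ₗ (LinearMap.id + (Complex.I * h * r) • (MvPolynomial.pderiv z).toLinearMap))
          ∘ₗ Pop k -
        Pop k ∘ₗ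
          (Mop z ∘ₗ (LinearMap.id + (Complex.I * h * r) • (MvPolynomial.pderiv z).toLinearMap))
        = 0) ∧
    (∀ i : Fin n, i ≠ z → (Mop i ∘ₗ g) ∘ₗ Pop z - Pop z ∘ₗ (Mop i ∘ₗ g) = 0) ∧
    (∀ i k : Fin n, i ≠ z → k ≠ z →
      (Mop i ∘ₗ g) ∘ₗ Pop k - Pop k ∘ₗ (Mop i ∘ₗ g) =
        if i = k then Complex.I • g else 0) := by
  have coeD : ∀ (k : Fin n) (f : MvPolynomial (Fin n) ℂ),
      (MvPolynomial.pderiv k).toLinearMap f = MvPolynomial.pderiv k f := fun _ _ => rfl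
  have hpowcomm : ∀ (k : Fin n) (m : ℕ) (f : MvPolynomial (Fin n) ℂ),
      ((MvPolynomial.pderiv z).toLinearMap ^ m) (MvPolynomial.pderiv k f) =
        MvPolynomial.pderiv k (((MvPolynomial.pderiv z).toLinearMap ^ m) f) := by
    intro k m
    induction m with
    | zero => intro f; simp
    | succ m ih =>
      intro f
      rw [pow_succ, Module.End.mul_apply, Module.End.mul_apply, coeD, coeD,
        pderiv_comm' z k, ih]
  have hgcomm : ∀ (k : Fin n) (f : MvPolynomial (Fin n) ℂ),
      g (MvPolynomial.pderiv k f) = MvPolynomial.pderiv k (g f) := by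
    intro k f
    rw [hg f (f.totalDegree + 1) (Nat.lt_succ_self _),
      hg (MvPolynomial.pderiv k f) (f.totalDegree + 1)
        (Nat.lt_succ_of_le (totalDegree_pderiv_le k f)),
      map_sum]
    refine Finset.sum_congr rfl fun m _ => ?_
    rw [hpowcomm, Derivation.map_smul]
  have hXz : ∀ (j : Fin n) (f : MvPolynomial (Fin n) ℂ),
      MvPolynomial.pderiv j (MvPolynomial.X j * f) = f + MvPolynomial.X j *
        MvPolynomial.pderiv j f := by
    intro j f
    rw [MvPolynomial.pderiv_mul, MvPolynomial.pderiv_X_self, one_mul]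
  have hXne : ∀ (i k : Fin n), i ≠ k → ∀ (f : MvPolynomial (Fin n) ℂ),
      MvPolynomial.pderiv k (MvPolynomial.X i * f) = MvPolynomial.X i *
        MvPolynomial.pderiv k f := by
    intro i k hik f
    rw [MvPolynomial.pderiv_mul, MvPolynomial.pderiv_X_of_ne hik, zero_mul, zero_add]
  refine ⟨?_, ?_, ?_, ?_⟩
  · refine LinearMap.ext fun f => ?_
    simp only [LinearMap.sub_apply, LinearMap.comp_apply, LinearMap.add_apply,
      LinearMap.smul_apply, LinearMap.id_apply, Mop, Pop, LinearMap.mulLeft_apply,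
      coeD, map_smul, map_add, smul_add, mul_add, mul_smul_comm]
    rw [hXz z, hXz z]
    simp only [map_add, map_smul, smul_add]
    module
  · intro k hk
    refine LinearMap.ext fun f => ?_
    simp only [LinearMap.sub_apply, LinearMap.comp_apply, LinearMap.add_apply,
      LinearMap.smul_apply, LinearMap.id_apply, Mop, Pop, LinearMap.mulLeft_apply,
      coeD, map_smul, map_add, smul_add, mul_add, mul_smul_comm, LinearMap.zero_apply]
    rw [hXne z k (Ne.symm hk), hXne z k (Ne.symm hk), pderiv_comm' k z]
    module
  · intro i hi
    refine LinearMap.ext fun f => ?_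
    simp only [LinearMap.sub_apply, LinearMap.comp_apply, Mop, Pop,
      LinearMap.mulLeft_apply, coeD, LinearMap.smul_apply, map_smul,
      LinearMap.zero_apply]
    rw [hgcomm z f, hXne i z hi]
    module
  · intro i k hi hk
    rcases eq_or_ne i k with rfl | hik
    · rw [if_pos rfl]
      refine LinearMap.ext fun f => ?_
      simp only [LinearMap.sub_apply, LinearMap.comp_apply, Mop, Pop,
        LinearMap.mulLeft_apply, coeD, LinearMap.smul_apply, map_smul]
      rw [hgcomm i f, hXz i]
      module
    · rw [if_neg hik]
      refine LinearMap.ext fun f => ?_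
      simp only [LinearMap.sub_apply, LinearMap.comp_apply, Mop, Pop,
        LinearMap.mulLeft_apply, coeD, LinearMap.smul_apply, map_smul,
        LinearMap.zero_apply]
      rw [hgcomm k f, hXne i k hik]
      module
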